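/- Let ℰ be a probability measure on the unitary group U(d) and define the 2k-th moment operator Φ_{2k}^ℰ = ∫ U^{⊗k} ⊗ (U†)^{⊗k} dμ_ℰ[U]. Then the Hilbert–Schmidt distance to the Haar moment operator satisfies Tr[(Φ_{2k}^ℰ − Φ_{2k}^{Haar})† (Φ_{2k}^ℰ − Φ_{2k}^{Haar})] = F_k^ℰ − F_k^{Haar}, where F_k^ℰ = ∫∫ |Tr(U†V)|^{2k} dμ_ℰ[U] dμ_ℰ[V] is the k-th frame potential. In particular F_k^ℰ ≥ F_k^{Haar} for every measure ℰ. -/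

import Mathlib

open Matrix BigOperators MeasureTheory

noncomputable instance matrixMeasurableSpace (d : ℕ) :
    MeasurableSpace (Matrix (Fin d) (Fin d) ℂ) :=
  show MeasurableSpace (Fin d → Fin d → ℂ) from inferInstance

/-- The `2k`-th moment operator `Φ_{2k}^μ = ∫ U^{⊗k} ⊗ (U†)^{⊗k} dμ[U]`, written as a matrix
on `(ℂ^d)^{⊗2k}` (indices grouped as `k` "upper" and `k` "lower" tensor factors). -/
noncomputable def momentOp (d k : ℕ) (μ : Measure (Matrix (Fin d) (Fin d) ℂ)) :
    Matrix ((Fin k → Fin d) × (Fin k → Fin d)) ((Fin k → Fin d) × (Fin k → Fin d)) ℂ :=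
  Matrix.of fun r c =>
    ∫ U, (∏ a, U (r.1 a) (c.1 a)) * (∏ a, star (U (c.2 a) (r.2 a))) ∂μ

/-- The `k`-th frame potential `F_k^μ = ∫∫ |Tr(U†V)|^{2k} dμ[U] dμ[V]`. -/
noncomputable def framePot (d k : ℕ) (μ : Measure (Matrix (Fin d) (Fin d) ℂ)) : ℝ :=
  ∫ U, ∫ V, ‖(Uᴴ * V).trace‖ ^ (2 * k) ∂μ ∂μ

variable {d k : ℕ}

abbrev Mat (d : ℕ) := Matrix (Fin d) (Fin d) ℂ
abbrev Idx (d k : ℕ) := (Fin k → Fin d) × (Fin k → Fin d)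

lemma measurable_entry (i j : Fin d) : Measurable fun U : Mat d => U i j :=
  (measurable_pi_apply j).comp (measurable_pi_apply i)

/-- entry integrand of momentOp -/
noncomputable def ff (r c : Idx d k) (U : Mat d) : ℂ :=
  (∏ a, U (r.1 a) (c.1 a)) * (∏ a, star (U (c.2 a) (r.2 a)))

lemma measurable_ff (r c : Idx d k) : Measurable (ff r c) := by
  apply Measurable.mul
  · exact Finset.measurable_prod _ fun a _ => measurable_entry _ _
  · exact Finset.measurable_prod _ fun a _ => Complex.continuous_conj.measurable.comp (measurable_entry _ _)

lemma entry_norm_le {U : Mat d} (hU : U ∈ Matrix.unitaryGroup (Fin d) ℂ) (i j : Fin d) :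
    ‖U i j‖ ≤ 1 := by
  have h1 : star U * U = 1 := (Matrix.mem_unitaryGroup_iff').mp hU
  have h2 : (star U * U) j j = 1 := by rw [h1]; simp
  rw [Matrix.mul_apply] at h2
  have h3 : ∀ l, (star U) j l * U l j = ((‖U l j‖^2 : ℝ) : ℂ) := by
    intro l
    simp only [Matrix.star_apply, RCLike.star_def]
    rw [mul_comm, Complex.mul_conj]
    norm_cast
    rw [Complex.normSq_eq_norm_sq]
  simp only [h3] at h2
  rw [← Complex.ofReal_sum] at h2
  have h4 : (∑ l, ‖U l j‖^2 : ℝ) = 1 := by exact_mod_cast h2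
  have h5 : ‖U i j‖^2 ≤ 1 := by
    rw [← h4]
    exact Finset.single_le_sum (f := fun l => ‖U l j‖^2) (fun l _ => sq_nonneg _) (Finset.mem_univ i)
  nlinarith [norm_nonneg (U i j)]

lemma norm_ff_le {U : Mat d} (hU : U ∈ Matrix.unitaryGroup (Fin d) ℂ) (r c : Idx d k) :
    ‖ff r c U‖ ≤ 1 := by
  unfold ff
  rw [norm_mul]
  have b1 : ‖∏ a, U (r.1 a) (c.1 a)‖ ≤ 1 := by
    rw [norm_prod]
    exact Finset.prod_le_one (fun a _ => norm_nonneg _) (fun a _ => entry_norm_le hU _ _)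
  have b2 : ‖∏ a, star (U (c.2 a) (r.2 a))‖ ≤ 1 := by
    rw [norm_prod]
    refine Finset.prod_le_one (fun a _ => norm_nonneg _) (fun a _ => ?_)
    rw [norm_star]; exact entry_norm_le hU _ _
  calc ‖∏ a, U (r.1 a) (c.1 a)‖ * ‖∏ a, star (U (c.2 a) (r.2 a))‖ ≤ 1 * 1 :=
        mul_le_mul b1 b2 (norm_nonneg _) zero_le_one
    _ = 1 := mul_one 1

lemma integrable_ff {μ : Measure (Mat d)} [IsFiniteMeasure μ]
    (hsupp : ∀ᵐ U ∂μ, U ∈ Matrix.unitaryGroup (Fin d) ℂ) (r c : Idx d k) :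
    Integrable (ff r c) μ :=
  ⟨(measurable_ff r c).aestronglyMeasurable,
    HasFiniteIntegral.of_bounded (C := 1) (hsupp.mono fun U hU => norm_ff_le hU r c)⟩

lemma trace_eq (U V : Mat d) :
    (Uᴴ * V).trace = ∑ p : Fin d × Fin d, (starRingEnd ℂ) (U p.1 p.2) * V p.1 p.2 := by
  rw [Fintype.sum_prod_type, Matrix.trace]
  simp only [Matrix.diag, Matrix.mul_apply, Matrix.conjTranspose_apply, RCLike.star_def]
  exact Finset.sum_comm

lemma pow_sum (g : Fin d × Fin d → ℂ) :
    (∑ p, g p) ^ k = ∑ x : Fin k → Fin d × Fin d, ∏ a, g (x a) := by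
  have h : (∑ p, g p) ^ k = ∏ _a : Fin k, (∑ p, g p) := by
    simp [Finset.prod_const]
  rw [h, Finset.prod_univ_sum]
  simp

def rdx (d k : ℕ) : (Idx d k × Idx d k) ≃ ((Fin k → Fin d × Fin d) × (Fin k → Fin d × Fin d)) where
  toFun p := (fun a => (p.2.1 a, p.1.1 a), fun a => (p.1.2 a, p.2.2 a))
  invFun q := ((fun a => (q.1 a).2, fun a => (q.2 a).1), (fun a => (q.1 a).1, fun a => (q.2 a).2))
  left_inv p := rfl
  right_inv q := rfl

set_option maxHeartbeats 1000000 in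
lemma core (U V : Mat d) :
    ∑ c : Idx d k, ∑ r : Idx d k, (starRingEnd ℂ) (ff r c U) * ff r c V
      = (Uᴴ * V).trace ^ k * (starRingEnd ℂ) ((Uᴴ * V).trace) ^ k := by
  have hconj : (starRingEnd ℂ) ((Uᴴ * V).trace)
      = ∑ p : Fin d × Fin d, U p.1 p.2 * (starRingEnd ℂ) (V p.1 p.2) := by
    rw [trace_eq, map_sum]
    simp [mul_comm]
  rw [hconj, trace_eq, pow_sum, pow_sum, Finset.sum_mul_sum]
  have key : ∑ p : Idx d k × Idx d k, (starRingEnd ℂ) (ff p.2 p.1 U) * ff p.2 p.1 V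
      = ∑ q : (Fin k → Fin d × Fin d) × (Fin k → Fin d × Fin d),
          (∏ a, (starRingEnd ℂ) (U (q.1 a).1 (q.1 a).2) * V (q.1 a).1 (q.1 a).2) *
          ∏ a, U (q.2 a).1 (q.2 a).2 * (starRingEnd ℂ) (V (q.2 a).1 (q.2 a).2) := by
    refine Fintype.sum_equiv (rdx d k) _ _ ?_
    rintro ⟨⟨c1, c2⟩, ⟨r1, r2⟩⟩
    simp only [rdx, Equiv.coe_fn_mk, ff, _root_.map_mul, _root_.map_prod, Finset.prod_mul_distrib,
      RCLike.star_def, Complex.conj_conj]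
    ring
  calc ∑ c : Idx d k, ∑ r : Idx d k, (starRingEnd ℂ) (ff r c U) * ff r c V
      = ∑ p : Idx d k × Idx d k, (starRingEnd ℂ) (ff p.2 p.1 U) * ff p.2 p.1 V :=
        (Fintype.sum_prod_type (f := fun p : Idx d k × Idx d k =>
          (starRingEnd ℂ) (ff p.2 p.1 U) * ff p.2 p.1 V)).symm
    _ = ∑ q : (Fin k → Fin d × Fin d) × (Fin k → Fin d × Fin d),
          (∏ a, (starRingEnd ℂ) (U (q.1 a).1 (q.1 a).2) * V (q.1 a).1 (q.1 a).2) *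
          ∏ a, U (q.2 a).1 (q.2 a).2 * (starRingEnd ℂ) (V (q.2 a).1 (q.2 a).2) := key
    _ = ∑ i : Fin k → Fin d × Fin d, ∑ j : Fin k → Fin d × Fin d,
          (∏ a, (starRingEnd ℂ) (U (i a).1 (i a).2) * V (i a).1 (i a).2) *
          ∏ a, U (j a).1 (j a).2 * (starRingEnd ℂ) (V (j a).1 (j a).2) :=
        Fintype.sum_prod_type (f := fun q : (Fin k → Fin d × Fin d) × (Fin k → Fin d × Fin d) =>
          (∏ a, (starRingEnd ℂ) (U (q.1 a).1 (q.1 a).2) * V (q.1 a).1 (q.1 a).2) *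
          ∏ a, U (q.2 a).1 (q.2 a).2 * (starRingEnd ℂ) (V (q.2 a).1 (q.2 a).2))

lemma pow_conv (z : ℂ) : z ^ k * (starRingEnd ℂ) z ^ k = ((‖z‖ ^ (2 * k) : ℝ) : ℂ) := by
  rw [← mul_pow, Complex.mul_conj, pow_mul]
  push_cast
  rw [Complex.normSq_eq_norm_sq]
  norm_num

lemma momentOp_apply (μ : Measure (Mat d)) (r c : Idx d k) :
    momentOp d k μ r c = ∫ U, ff r c U ∂μ := rfl

lemma cross (μ lam : Measure (Mat d)) [IsProbabilityMeasure μ] [IsProbabilityMeasure lam]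
    (hμ : ∀ᵐ U ∂μ, U ∈ Matrix.unitaryGroup (Fin d) ℂ)
    (hlam : ∀ᵐ U ∂lam, U ∈ Matrix.unitaryGroup (Fin d) ℂ) :
    ((momentOp d k μ)ᴴ * momentOp d k lam).trace
      = ((∫ U, ∫ V, ‖(Uᴴ * V).trace‖ ^ (2 * k) ∂lam ∂μ : ℝ) : ℂ) := by
  have hCnorm : ∀ r c : Idx d k, ‖∫ V, ff r c V ∂lam‖ ≤ 1 := by
    intro r c
    have := norm_integral_le_of_norm_le_const (C := 1) (μ := lam)
      (f := ff r c) (hlam.mono fun V hV => norm_ff_le hV r c)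
    simpa using this
  have hInt1 : ∀ r c : Idx d k,
      Integrable (fun U => (starRingEnd ℂ) (ff r c U) * ∫ V, ff r c V ∂lam) μ := by
    intro r c
    refine ⟨((Complex.continuous_conj.measurable.comp (measurable_ff r c)).mul_const
      _).aestronglyMeasurable, HasFiniteIntegral.of_bounded (C := 1) ?_⟩
    filter_upwards [hμ] with U hU
    rw [norm_mul]
    calc ‖(starRingEnd ℂ) (ff r c U)‖ * ‖∫ V, ff r c V ∂lam‖
        ≤ 1 * 1 := by
          refine mul_le_mul ?_ (hCnorm r c) (norm_nonneg _) zero_le_one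
          rw [RCLike.norm_conj]; exact norm_ff_le hU r c
      _ = 1 := mul_one 1
  calc ((momentOp d k μ)ᴴ * momentOp d k lam).trace
      = ∑ c : Idx d k, ∑ r : Idx d k,
          (starRingEnd ℂ) (∫ U, ff r c U ∂μ) * ∫ V, ff r c V ∂lam := by
        simp only [Matrix.trace, Matrix.diag, Matrix.mul_apply, Matrix.conjTranspose_apply,
          momentOp_apply, RCLike.star_def]
    _ = ∑ c : Idx d k, ∑ r : Idx d k,
          ∫ U, (starRingEnd ℂ) (ff r c U) * ∫ V, ff r c V ∂lam ∂μ := by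
        refine Finset.sum_congr rfl fun c _ => Finset.sum_congr rfl fun r _ => ?_
        rw [← integral_conj, ← integral_mul_const]
    _ = ∫ U, ∑ c : Idx d k, ∑ r : Idx d k,
          (starRingEnd ℂ) (ff r c U) * ∫ V, ff r c V ∂lam ∂μ := by
        symm
        rw [integral_finset_sum _ (fun c _ => integrable_finset_sum _ fun r _ => hInt1 r c)]
        exact Finset.sum_congr rfl fun c _ => integral_finset_sum _ fun r _ => hInt1 r c
    _ = ∫ U, ∑ c : Idx d k, ∑ r : Idx d k,
          ∫ V, (starRingEnd ℂ) (ff r c U) * ff r c V ∂lam ∂μ := by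
        refine integral_congr_ae (Filter.Eventually.of_forall fun U => ?_)
        refine Finset.sum_congr rfl fun c _ => Finset.sum_congr rfl fun r _ => ?_
        rw [integral_const_mul]
    _ = ∫ U, ∫ V, ∑ c : Idx d k, ∑ r : Idx d k,
          (starRingEnd ℂ) (ff r c U) * ff r c V ∂lam ∂μ := by
        refine integral_congr_ae (Filter.Eventually.of_forall fun U => ?_)
        dsimp only
        symm
        rw [integral_finset_sum _ (fun c _ => integrable_finset_sum _ fun r _ =>
          (integrable_ff hlam r c).const_mul _)]
        exact Finset.sum_congr rfl fun c _ => integral_finset_sum _ fun r _ =>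
          (integrable_ff hlam r c).const_mul _
    _ = ∫ U, ∫ V, (((‖(Uᴴ * V).trace‖ ^ (2 * k) : ℝ)) : ℂ) ∂lam ∂μ := by
        refine integral_congr_ae (Filter.Eventually.of_forall fun U => ?_)
        refine integral_congr_ae (Filter.Eventually.of_forall fun V => ?_)
        dsimp only
        rw [core, pow_conv]
    _ = ((∫ U, ∫ V, ‖(Uᴴ * V).trace‖ ^ (2 * k) ∂lam ∂μ : ℝ) : ℂ) := by
        calc ∫ U, ∫ V, (((‖(Uᴴ * V).trace‖ ^ (2 * k) : ℝ)) : ℂ) ∂lam ∂μ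
            = ∫ U, (((∫ V, ‖(Uᴴ * V).trace‖ ^ (2 * k) ∂lam : ℝ)) : ℂ) ∂μ :=
              integral_congr_ae (Filter.Eventually.of_forall fun U => integral_ofReal)
          _ = ((∫ U, ∫ V, ‖(Uᴴ * V).trace‖ ^ (2 * k) ∂lam ∂μ : ℝ) : ℂ) := integral_ofReal

lemma measurable_pot (U : Mat d) :
    Measurable fun V : Mat d => ‖(Uᴴ * V).trace‖ ^ (2 * k) := by
  have h : Measurable fun V : Mat d => (Uᴴ * V).trace := by
    simp only [trace_eq]
    exact Finset.measurable_sum _ fun p _ => (measurable_entry p.1 p.2).const_mul _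
  exact h.norm.pow_const _

lemma measurable_mul_left (A : Mat d) : Measurable fun W : Mat d => A * W := by
  refine measurable_pi_lambda _ fun i => measurable_pi_lambda _ fun j => ?_
  simp only [Matrix.mul_apply]
  exact Finset.measurable_sum _ fun l _ => (measurable_entry l j).const_mul _

lemma inner_const (ν : Measure (Mat d)) [IsProbabilityMeasure ν]
    (hνleft : ∀ V ∈ Matrix.unitaryGroup (Fin d) ℂ, Measure.map (fun U => V * U) ν = ν)
    {U : Mat d} (hU : U ∈ Matrix.unitaryGroup (Fin d) ℂ) :
    ∫ V, ‖(Uᴴ * V).trace‖ ^ (2 * k) ∂ν = ∫ W, ‖W.trace‖ ^ (2 * k) ∂ν := by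
  conv_lhs => rw [← hνleft U hU]
  rw [integral_map (measurable_mul_left U).aemeasurable
    (measurable_pot U).aestronglyMeasurable]
  refine integral_congr_ae (Filter.Eventually.of_forall fun W => ?_)
  have h1 : Uᴴ * U = 1 := by
    have := Matrix.mem_unitaryGroup_iff'.mp hU
    rwa [Matrix.star_eq_conjTranspose] at this
  have : Uᴴ * (U * W) = W := by rw [← mul_assoc, h1, one_mul]
  simp only [this]

lemma cross_eq (μ ν : Measure (Mat d)) [IsProbabilityMeasure μ] [IsProbabilityMeasure ν]
    (hμsupp : ∀ᵐ U ∂μ, U ∈ Matrix.unitaryGroup (Fin d) ℂ)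
    (hνleft : ∀ V ∈ Matrix.unitaryGroup (Fin d) ℂ, Measure.map (fun U => V * U) ν = ν) :
    ∫ U, ∫ V, ‖(Uᴴ * V).trace‖ ^ (2 * k) ∂ν ∂μ = ∫ W, ‖W.trace‖ ^ (2 * k) ∂ν := by
  have h : ∀ᵐ U ∂μ, (∫ V, ‖(Uᴴ * V).trace‖ ^ (2 * k) ∂ν)
      = ∫ W, ‖W.trace‖ ^ (2 * k) ∂ν :=
    hμsupp.mono fun U hU => inner_const ν hνleft hU
  rw [integral_congr_ae h, integral_const]
  simp

lemma trace_nonneg_form (M : Matrix (Idx d k) (Idx d k) ℂ) :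
    (Mᴴ * M).trace = ((∑ c : Idx d k, ∑ r : Idx d k, ‖M r c‖ ^ 2 : ℝ) : ℂ) := by
  simp only [Matrix.trace, Matrix.diag, Matrix.mul_apply, Matrix.conjTranspose_apply]
  push_cast
  refine Finset.sum_congr rfl fun c _ => Finset.sum_congr rfl fun r _ => ?_
  rw [RCLike.star_def, mul_comm, Complex.mul_conj]
  norm_cast
  rw [Complex.normSq_eq_norm_sq]

/-- For a probability measure `μ` on the unitary group and the (normalized, two-sided
invariant) Haar probability measure `ν` on the unitary group, the Hilbert–Schmidt distance of
moment operators satisfies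
`Tr[(Φ_{2k}^μ − Φ_{2k}^ν)†(Φ_{2k}^μ − Φ_{2k}^ν)] = F_k^μ − F_k^ν`; in particular
`F_k^ν ≤ F_k^μ`. -/
theorem stmt6 (d k : ℕ) (μ ν : Measure (Matrix (Fin d) (Fin d) ℂ))
    [IsProbabilityMeasure μ] [IsProbabilityMeasure ν]
    (hμsupp : ∀ᵐ U ∂μ, U ∈ Matrix.unitaryGroup (Fin d) ℂ)
    (hνsupp : ∀ᵐ U ∂ν, U ∈ Matrix.unitaryGroup (Fin d) ℂ)
    (hνleft : ∀ V ∈ Matrix.unitaryGroup (Fin d) ℂ,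
      Measure.map (fun U => V * U) ν = ν)
    (hνright : ∀ V ∈ Matrix.unitaryGroup (Fin d) ℂ,
      Measure.map (fun U => U * V) ν = ν) :
    ((momentOp d k μ - momentOp d k ν)ᴴ * (momentOp d k μ - momentOp d k ν)).trace
        = ((framePot d k μ - framePot d k ν : ℝ) : ℂ) ∧
      framePot d k ν ≤ framePot d k μ := by
  set A := momentOp d k μ with hA
  set B := momentOp d k ν with hB
  -- the cross terms
  have hAB : (Aᴴ * B).trace = ((framePot d k ν : ℝ) : ℂ) := by
    rw [hA, hB, cross μ ν hμsupp hνsupp, cross_eq μ ν hμsupp hνleft]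
    have : framePot d k ν = ∫ W, ‖W.trace‖ ^ (2 * k) ∂ν := by
      rw [framePot]
      exact cross_eq ν ν hνsupp hνleft
    rw [this]
  have hBA : (Bᴴ * A).trace = ((framePot d k ν : ℝ) : ℂ) := by
    have h1 : (Bᴴ * A).trace = star ((Aᴴ * B).trace) := by
      rw [← Matrix.trace_conjTranspose, Matrix.conjTranspose_mul,
        Matrix.conjTranspose_conjTranspose]
    rw [h1, hAB, RCLike.star_def, Complex.conj_ofReal]
  have hAA : (Aᴴ * A).trace = ((framePot d k μ : ℝ) : ℂ) := by
    rw [hA, cross μ μ hμsupp hμsupp]; rfl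
  have hBB : (Bᴴ * B).trace = ((framePot d k ν : ℝ) : ℂ) := by
    rw [hB, cross ν ν hνsupp hνsupp]; rfl
  have hexp : ((A - B)ᴴ * (A - B)).trace
      = (Aᴴ * A).trace - (Aᴴ * B).trace - ((Bᴴ * A).trace - (Bᴴ * B).trace) := by
    rw [Matrix.conjTranspose_sub, Matrix.sub_mul, Matrix.mul_sub, Matrix.mul_sub,
      Matrix.trace_sub, Matrix.trace_sub, Matrix.trace_sub]
  have hmain : ((A - B)ᴴ * (A - B)).trace = ((framePot d k μ - framePot d k ν : ℝ) : ℂ) := by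
    rw [hexp, hAA, hAB, hBA, hBB]
    push_cast
    ring
  refine ⟨hmain, ?_⟩
  have hs : ((A - B)ᴴ * (A - B)).trace
      = ((∑ c : Idx d k, ∑ r : Idx d k, ‖(A - B) r c‖ ^ 2 : ℝ) : ℂ) := trace_nonneg_form _
  have heq : framePot d k μ - framePot d k ν
      = ∑ c : Idx d k, ∑ r : Idx d k, ‖(A - B) r c‖ ^ 2 := by
    have := hmain.symm.trans hs
    exact_mod_cast this
  have hnn : (0:ℝ) ≤ ∑ c : Idx d k, ∑ r : Idx d k, ‖(A - B) r c‖ ^ 2 :=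
    Finset.sum_nonneg fun c _ => Finset.sum_nonneg fun r _ => sq_nonneg _
  linarith [heq ▸ hnn]
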